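/- Let L ≥ 1 be a natural number, γ ∈ [0, 1), M > 0, d ≥ 0, and let W_0, …, W_L be real-valued random variables on a probability space with |W_k| ≤ M almost surely for every k, E[W_k] ≤ 0 for every 0 ≤ k ≤ L, and E[W_0] ≤ -d. Define U := Σ_{k=0}^{L} γ^k W_k and V := M²/(1-γ)². Then P(U > 0) ≤ V / (V + d²). -/

import Mathlib

open MeasureTheory ProbabilityTheory

set_option maxHeartbeats 1000000 in
/-- Probability of a false UB hinge penalty: with `|W_k| ≤ M` a.s., `E[W_k] ≤ 0` for
all `0 ≤ k ≤ L`, `E[W_0] ≤ -d`, `U = Σ_{k≤L} γ^k W_k`, and `V = M²/(1-γ)²`,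
we have `P(U > 0) ≤ V / (V + d²)`. -/
theorem ub_false_penalty_prob {Ω : Type*} [MeasureSpace Ω]
    [IsProbabilityMeasure (ℙ : Measure Ω)]
    (L : ℕ) (hL : 1 ≤ L) (γ M d : ℝ) (hγ0 : 0 ≤ γ) (hγ1 : γ < 1) (hM : 0 < M) (hd : 0 ≤ d)
    (W : ℕ → Ω → ℝ) (hmeas : ∀ k, Measurable (W k))
    (hbd : ∀ k, ∀ᵐ ω ∂ℙ, |W k ω| ≤ M)
    (hWk : ∀ k, k ≤ L → (∫ ω, W k ω) ≤ 0)
    (hW0 : (∫ ω, W 0 ω) ≤ -d) :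
    (ℙ {ω | 0 < ∑ k ∈ Finset.range (L + 1), γ ^ k * W k ω}).toReal ≤
      (M ^ 2 / (1 - γ) ^ 2) / (M ^ 2 / (1 - γ) ^ 2 + d ^ 2) := by
  have h1γ : (0:ℝ) < 1 - γ := by linarith
  set B : ℝ := M / (1 - γ) with hBdef
  have hB : 0 < B := div_pos hM h1γ
  set U : Ω → ℝ := fun ω => ∑ k ∈ Finset.range (L + 1), γ ^ k * W k ω with hUdef
  have hV : M ^ 2 / (1 - γ) ^ 2 = B ^ 2 := by rw [hBdef, div_pow]
  set s : Set Ω := {ω | 0 < U ω} with hsdef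
  have hUmeas : Measurable U :=
    Finset.measurable_sum _ fun k _ => (hmeas k).const_mul _
  have hs : MeasurableSet s := measurableSet_lt measurable_const hUmeas
  -- a.e. bound on U
  have hbdall : ∀ᵐ ω ∂ℙ, ∀ k, |W k ω| ≤ M := (ae_all_iff).2 hbd
  have hUbd : ∀ᵐ ω ∂ℙ, |U ω| ≤ B := by
    filter_upwards [hbdall] with ω hω
    have h1 : |U ω| ≤ ∑ k ∈ Finset.range (L + 1), γ ^ k * M := by
      refine (Finset.abs_sum_le_sum_abs _ _).trans (Finset.sum_le_sum fun k _ => ?_)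
      rw [abs_mul, abs_pow, abs_of_nonneg hγ0]
      exact mul_le_mul_of_nonneg_left (hω k) (pow_nonneg hγ0 k)
    have h2 : ∑ k ∈ Finset.range (L + 1), γ ^ k * M ≤ B := by
      rw [← Finset.sum_mul]
      have hg : ∑ k ∈ Finset.range (L + 1), γ ^ k = (γ ^ (L+1) - 1) / (γ - 1) :=
        geom_sum_eq (ne_of_lt hγ1) _
      have hgn : (0:ℝ) ≤ γ ^ (L+1) := pow_nonneg hγ0 _
      have hg1 : γ ^ (L+1) ≤ 1 := pow_le_one₀ hγ0 hγ1.le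
      have heq : (γ ^ (L+1) - 1) / (γ - 1) = (1 - γ ^ (L+1)) / (1 - γ) := by
        rw [div_eq_div_iff (by linarith : γ - 1 ≠ 0) (ne_of_gt h1γ)]
        ring
      have : ∑ k ∈ Finset.range (L + 1), γ ^ k ≤ 1 / (1 - γ) := by
        rw [hg, heq]
        gcongr
        · linarith
      calc (∑ k ∈ Finset.range (L + 1), γ ^ k) * M ≤ (1 / (1 - γ)) * M :=
            mul_le_mul_of_nonneg_right this hM.le
        _ = B := by rw [hBdef]; ring
    exact h1.trans h2
  -- integrability
  have hWint : ∀ k, Integrable (W k) := fun k =>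
    ⟨(hmeas k).aestronglyMeasurable,
      HasFiniteIntegral.of_bounded ((hbd k).mono fun ω h => by
        rwa [Real.norm_eq_abs])⟩
  have hUint : Integrable U :=
    integrable_finset_sum _ fun k _ => ((hWint k).const_mul _)
  have hU2int : Integrable (fun ω => (U ω) ^ 2) := by
    refine ⟨(hUmeas.pow_const 2).aestronglyMeasurable,
      HasFiniteIntegral.of_bounded (C := B ^ 2) (hUbd.mono fun ω h => ?_)⟩
    rw [Real.norm_eq_abs, abs_pow]
    exact pow_le_pow_left₀ (abs_nonneg _) h 2
  -- mean bound
  have hmean : ∫ ω, U ω ≤ -d := by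
    have hIU : ∫ ω, U ω = ∑ k ∈ Finset.range (L + 1), γ ^ k * ∫ ω, W k ω := by
      rw [hUdef, integral_finset_sum _ fun k _ => (hWint k).const_mul _]
      exact Finset.sum_congr rfl fun k _ => integral_const_mul _ _
    rw [hIU]
    have h0mem : 0 ∈ Finset.range (L + 1) := Finset.mem_range.2 (Nat.succ_pos L)
    rw [← Finset.add_sum_erase _ _ h0mem]
    have hrest : ∑ k ∈ (Finset.range (L + 1)).erase 0, γ ^ k * ∫ ω, W k ω ≤ 0 := by
      refine Finset.sum_nonpos fun k hk => ?_
      have hkL : k ≤ L := Nat.lt_succ_iff.1 (Finset.mem_range.1 (Finset.mem_erase.1 hk).2)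
      exact mul_nonpos_of_nonneg_of_nonpos (pow_nonneg hγ0 k) (hWk k hkL)
    have h0 : γ ^ 0 * ∫ ω, W 0 ω ≤ -d := by simpa using hW0
    linarith
  -- second moment bound
  have hvar : ∫ ω, (U ω) ^ 2 ≤ B ^ 2 := by
    have : ∫ ω, (U ω) ^ 2 ≤ ∫ _ω : Ω, B ^ 2 := by
      refine integral_mono_ae hU2int (integrable_const _) ?_
      filter_upwards [hUbd] with ω h
      calc (U ω) ^ 2 = |U ω| ^ 2 := (sq_abs _).symm
        _ ≤ B ^ 2 := pow_le_pow_left₀ (abs_nonneg _) h 2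
    simpa using this
  set P : ℝ := (ℙ s).toReal with hPdef
  have hPnonneg : 0 ≤ P := ENNReal.toReal_nonneg
  have hP1 : P ≤ 1 := by
    rw [hPdef]
    exact ENNReal.toReal_le_of_le_ofReal zero_le_one (by simpa using prob_le_one)
  rw [hV]
  rcases eq_or_lt_of_le hd with hd0 | hdpos
  · rw [← hd0]
    have : B ^ 2 / (B ^ 2 + (0:ℝ) ^ 2) = 1 := by
      field_simp
      ring
    rw [this]
    exact hP1
  -- main case: Cantelli with λ = B²/d
  set lam : ℝ := B ^ 2 / d with hlamdef
  have hlam : 0 < lam := div_pos (pow_pos hB 2) hdpos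
  have hUlint : Integrable (fun ω => (U ω + lam) ^ 2) := by
    have : (fun ω => (U ω + lam) ^ 2)
        = fun ω => (U ω) ^ 2 + (2 * lam) * U ω + lam ^ 2 := by
      funext ω; ring
    rw [this]
    exact (hU2int.add (hUint.const_mul _)).add (integrable_const _)
  -- Markov-type step
  have hkey : lam ^ 2 * P ≤ ∫ ω, (U ω + lam) ^ 2 := by
    have hind : ∫ ω, s.indicator (fun _ => lam ^ 2) ω = P * lam ^ 2 := by
      rw [integral_indicator_const _ hs]; simp [hPdef, smul_eq_mul, measureReal_def]
    have hmono : ∫ ω, s.indicator (fun _ => lam ^ 2) ω ≤ ∫ ω, (U ω + lam) ^ 2 := by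
      refine integral_mono_ae ((integrable_const _).indicator hs) hUlint ?_
      refine Filter.Eventually.of_forall fun ω => ?_
      by_cases hω : ω ∈ s
      · rw [Set.indicator_of_mem hω]
        have hU0 : 0 < U ω := hω
        show lam ^ 2 ≤ (U ω + lam) ^ 2
        nlinarith
      · rw [Set.indicator_of_notMem hω]
        positivity
    rw [hind] at hmono; linarith
  have hexp : ∫ ω, (U ω + lam) ^ 2
      = (∫ ω, (U ω) ^ 2) + 2 * lam * (∫ ω, U ω) + lam ^ 2 := by
    have ha : Integrable (fun ω => (U ω) ^ 2 + 2 * lam * U ω) :=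
      hU2int.add (hUint.const_mul _)
    have h1 : ∀ ω, (U ω + lam) ^ 2 = ((U ω) ^ 2 + 2 * lam * U ω) + lam ^ 2 := by
      intro ω; ring
    have e1 : ∫ ω, (((U ω) ^ 2 + 2 * lam * U ω) + lam ^ 2)
        = (∫ ω, ((U ω) ^ 2 + 2 * lam * U ω)) + ∫ _ω : Ω, lam ^ 2 :=
      integral_add ha (integrable_const _)
    have e2 : ∫ ω, ((U ω) ^ 2 + 2 * lam * U ω)
        = (∫ ω, (U ω) ^ 2) + ∫ ω, 2 * lam * U ω :=
      integral_add hU2int (hUint.const_mul _)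
    have e3 : ∫ ω, 2 * lam * U ω = 2 * lam * ∫ ω, U ω := integral_const_mul _ _
    simp only [h1]
    rw [e1, e2, e3, integral_const]
    simp
  have hkey2 : lam ^ 2 * P ≤ B ^ 2 - 2 * lam * d + lam ^ 2 := by
    rw [hexp] at hkey
    nlinarith [mul_le_mul_of_nonneg_left hmean (by positivity : (0:ℝ) ≤ 2 * lam)]
  -- final arithmetic
  have hdne : d ≠ 0 := ne_of_gt hdpos
  have hd2 : (0:ℝ) < d ^ 2 := by positivity
  have hBd : (0:ℝ) < B ^ 2 + d ^ 2 := by positivity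
  have hB2 : (0:ℝ) < B ^ 2 := pow_pos hB 2
  -- multiply hkey2 through by d² to clear denominators
  have hld : lam * d = B ^ 2 := div_mul_cancel₀ _ hdne
  have hld2 : lam ^ 2 * d ^ 2 = B ^ 2 * B ^ 2 := by rw [← hld]; ring
  have hkey3 : B ^ 2 * B ^ 2 * P ≤ B ^ 2 * B ^ 2 - B ^ 2 * d ^ 2 := by
    have h := mul_le_mul_of_nonneg_right hkey2 hd2.le
    nlinarith [h, hld, hld2, hPnonneg, hP1, hd2, hB2]
  rw [le_div_iff₀ hBd]
  nlinarith [mul_le_mul_of_nonneg_right hP1 (mul_pos hB2 hd2).le]
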